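/- If a graph F has minimum degree at least 3 and has a Hamiltonian cycle C, then K₄ can be obtained from F by contracting edges of C (i.e., F has a cyclic K₄-minor witnessed by C). -/

import Mathlib

open List SimpleGraph

private lemma cyclicK4_mod_helper {n a t : ℕ} (ha : a < n) (ht : t < n) :
    ((a + t) % n + (n - a)) % n = t := by
  rcases Nat.lt_or_ge (a + t) n with h | h
  · rw [Nat.mod_eq_of_lt h, show a + t + (n - a) = t + n by omega, Nat.add_mod_right,
      Nat.mod_eq_of_lt ht]
  · have h2 : (a + t) % n = a + t - n := by
      rw [Nat.mod_eq_sub_mod h, Nat.mod_eq_of_lt (by omega)]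
    rw [h2, show a + t - n + (n - a) = t by omega, Nat.mod_eq_of_lt ht]

/-- If `F` has minimum degree at least 3 and a Hamiltonian cycle `C`, then `K₄` can be
obtained from `F` by contracting edges of `C`: there is a partition of `V(F)` into 4
classes (fibers of `f`), each inducing a subpath of `C` (the classes appear as
consecutive blocks along a rotation of the cyclic order of `C`), such that any two
distinct classes are joined by an edge of `F`. -/
theorem cyclic_K4_minor {V : Type*} [Fintype V] [DecidableEq V] (F : SimpleGraph V) [DecidableRel F.Adj]
    (hdeg : ∀ v : V, 3 ≤ F.degree v)
    {v : V} (C : F.Walk v v) (hC : C.IsHamiltonianCycle) :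
    ∃ (f : V → Fin 4) (r : ℕ),
      Function.Surjective f ∧
      List.Chain' (· ≤ ·) ((C.support.tail.rotate r).map f) ∧
      (∀ i j : Fin 4, i ≠ j → ∃ u w : V, f u = i ∧ f w = j ∧ F.Adj u w) := by
  classical
  set L : List V := C.support.tail with hLdef
  have hnotnil : ¬ C.Nil := hC.isCycle.not_nil
  have hts : C.tail.support = L := C.support_tail_of_not_nil hnotnil
  have hnodup : L.Nodup := hts ▸ hC.isHamiltonian_tail.isPath.support_nodup
  have hmemL : ∀ x : V, x ∈ L := fun x => hts ▸ hC.isHamiltonian_tail.mem_support x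
  set n := L.length with hndef
  have hlenV : n = Fintype.card V := by
    have h1 := congrArg List.length C.support_eq_cons
    rw [Walk.length_support, hC.length_eq] at h1
    simp only [List.length_cons, ← hLdef, ← hndef] at h1
    omega
  have hn4 : 4 ≤ n := by
    have h1 : F.degree v < Fintype.card V := F.degree_lt_card_verts v
    have h2 := hdeg v
    omega
  have hn0 : 0 < n := by omega
  -- the cyclic enumeration of vertices
  set ℓ : ℕ → V := fun m => L.getD (m % n) v with hldef
  have hgetD : ∀ m : ℕ, ℓ m = L.getD (m % n) v := fun m => rfl
  have hper : ∀ m, ℓ (m + n) = ℓ m := by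
    intro m
    simp only [hldef, Nat.add_mod_right]
  have hidx : ∀ m, L.idxOf (ℓ m) = m % n := by
    intro m
    rw [hgetD m, List.getD_eq_getElem _ _ (Nat.mod_lt _ hn0)]
    exact List.Nodup.idxOf_getElem hnodup _ _
  have hsurj : ∀ (m : ℕ) (x : V), ∃ t, t < n ∧ ℓ (m + t) = x := by
    intro m x
    obtain ⟨k, hk, hkx⟩ := List.mem_iff_getElem.mp (hmemL x)
    have hm : m % n < n := Nat.mod_lt _ hn0
    have key : ∀ t, t < n → m % n + t = k ∨ m % n + t = k + n → ℓ (m + t) = x := by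
      intro t ht h
      rw [hgetD, Nat.add_mod, Nat.mod_eq_of_lt ht]
      rcases h with h | h
      · rw [h, Nat.mod_eq_of_lt hk, List.getD_eq_getElem _ _ hk, hkx]
      · rw [h, Nat.add_mod_right, Nat.mod_eq_of_lt hk, List.getD_eq_getElem _ _ hk, hkx]
    rcases le_or_gt (m % n) k with h | h
    · exact ⟨k - m % n, by omega, key _ (by omega) (Or.inl (by omega))⟩
    · exact ⟨k + n - m % n, by omega, key _ (by omega) (Or.inr (by omega))⟩
  have hinj : ∀ a b, a < n → b < n → ℓ a = ℓ b → a = b := by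
    intro a b ha hb h
    have h2 := hidx a
    rw [h, hidx b] at h2
    rw [Nat.mod_eq_of_lt hb, Nat.mod_eq_of_lt ha] at h2
    exact h2.symm
  -- cyclic adjacency
  have hLne : L ≠ [] := List.ne_nil_of_length_pos hn0
  have hsupp : C.support = v :: L := C.support_eq_cons
  have hslen : C.support.length = n + 1 := by rw [hsupp]; simp [← hndef]
  have hlast : L.getD (n - 1) v = v := by
    have h2 := C.getLast_support
    rw [List.getLast_eq_getElem] at h2
    have h2' : C.support[C.support.length - 1]? = some v := by
      rw [List.getElem?_eq_getElem (by omega)]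
      exact congrArg some h2
    rw [hsupp, show (v :: L).length - 1 = (n - 1) + 1 by simp [← hndef]; omega,
      List.getElem?_cons_succ] at h2'
    obtain ⟨hlt, heq⟩ := List.getElem?_eq_some_iff.mp h2'
    rw [List.getD_eq_getElem _ _ hlt]
    exact heq
  have hchain : ∀ i, (hi : i + 1 < n + 1) →
      F.Adj ((v :: L).get ⟨i, by simp only [List.length_cons, ← hndef]; omega⟩)
        ((v :: L).get ⟨i + 1, by simp only [List.length_cons, ← hndef]; omega⟩) := by
    have h := C.isChain_adj_support
    rw [hsupp, List.isChain_iff_getElem] at h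
    intro i hi
    exact h i (by simp only [List.length_cons, ← hndef]; omega)
  have hadjD : ∀ i, i < n → F.Adj (L.getD i v) (L.getD ((i + 1) % n) v) := by
    intro i hi
    rcases Nat.lt_or_ge (i + 1) n with h | h
    · rw [Nat.mod_eq_of_lt h]
      have h0 := hchain (i + 1) (by omega)
      simp only [List.get_eq_getElem, List.getElem_cons_succ] at h0
      rwa [List.getD_eq_getElem _ _ (show i < L.length by omega),
        List.getD_eq_getElem _ _ (show i + 1 < L.length by omega)]
    · have h1 : (i + 1) % n = 0 := by rw [show i + 1 = n by omega, Nat.mod_self]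
      rw [h1, show i = n - 1 by omega, hlast]
      have h0 := hchain 0 (by omega)
      simp only [List.get_eq_getElem, List.getElem_cons_zero, List.getElem_cons_succ] at h0
      rwa [List.getD_eq_getElem _ _ (show 0 < L.length by omega)]
  have hadjmod : ∀ m, F.Adj (ℓ m) (ℓ (m + 1)) := by
    intro m
    have := hadjD (m % n) (Nat.mod_lt _ hn0)
    rw [hgetD, hgetD]
    rwa [Nat.mod_add_mod] at this
  -- chords
  have hchord : ∀ m, ∃ t, 2 ≤ t ∧ t ≤ n - 2 ∧ F.Adj (ℓ m) (ℓ (m + t)) := by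
    intro m
    have hdm := hdeg (ℓ m)
    have hns : ¬ F.neighborFinset (ℓ m) ⊆ {ℓ (m + 1), ℓ (m + (n - 1))} := by
      intro hsub
      have := Finset.card_le_card hsub
      have h2 : ({ℓ (m + 1), ℓ (m + (n - 1))} : Finset V).card ≤ 2 :=
        (Finset.card_insert_le _ _).trans (by simp)
      rw [F.card_neighborFinset_eq_degree] at this
      omega
    obtain ⟨w, hw1, hw2⟩ := Finset.not_subset.mp hns
    rw [F.mem_neighborFinset] at hw1
    simp only [Finset.mem_insert, Finset.mem_singleton, not_or] at hw2
    obtain ⟨t, ht, htw⟩ := hsurj m w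
    have ht0 : t ≠ 0 := by
      rintro rfl
      exact hw1.ne (by simpa using htw)
    have ht1 : t ≠ 1 := by rintro rfl; exact hw2.1 htw.symm
    have htn : t ≠ n - 1 := by rintro rfl; exact hw2.2 htw.symm
    exact ⟨t, by omega, by omega, htw ▸ hw1⟩
  -- minimal chord length
  set P : ℕ → Prop := fun gg => 2 ≤ gg ∧ gg + 2 ≤ n ∧ ∃ m, F.Adj (ℓ m) (ℓ (m + gg)) with hPdef
  have hPex : ∃ gg, P gg := by
    obtain ⟨t, ht2, htn, hadj⟩ := hchord 0
    exact ⟨t, ht2, by omega, 0, hadj⟩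
  set g := Nat.find hPex with hgdef
  obtain ⟨hg2, hgn, m0, hm0adj⟩ := Nat.find_spec hPex
  have hmin : ∀ t, t < g → ¬ P t := fun t ht => Nat.find_min hPex ht
  -- chord from position m0 + 1 must jump beyond g
  obtain ⟨j, hj2, hjn2, hjadj⟩ := hchord (m0 + 1)
  have hjadj' : F.Adj (ℓ (m0 + 1)) (ℓ (m0 + (1 + j))) := by
    rwa [show m0 + 1 + j = m0 + (1 + j) by omega] at hjadj
  have hgj : g ≤ j := by
    by_contra h
    push_neg at h
    exact hmin j h ⟨hj2, by omega, m0 + 1, hjadj⟩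
  -- the coloring
  set B : ℕ → Fin 4 := fun t => if t = 0 then 0 else if t < g then 1 else
    if t < 1 + j then 2 else 3 with hBdef
  set f : V → Fin 4 := fun x => B ((L.idxOf x + (n - m0 % n)) % n) with hfdef
  have hfl : ∀ t, t < n → f (ℓ (m0 + t)) = B t := by
    intro t ht
    show B ((L.idxOf (ℓ (m0 + t)) + (n - m0 % n)) % n) = B t
    rw [hidx]
    congr 1
    have hm : m0 % n < n := Nat.mod_lt _ hn0
    have e : (m0 + t) % n = (m0 % n + t) % n := (Nat.mod_add_mod _ _ _).symm
    rw [e]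
    exact cyclicK4_mod_helper hm ht
  have hBmono : ∀ s t, s ≤ t → B s ≤ B t := by
    intro s t hst
    simp only [hBdef]
    split_ifs <;> first | decide | omega
  -- the f-values at key positions
  have hB0 : B 0 = 0 := by simp [hBdef]
  have hB1 : B 1 = 1 := by
    simp only [hBdef]; rw [if_neg (by omega), if_pos (by omega)]
  have hBg1 : B (g - 1) = 1 := by
    simp only [hBdef]; rw [if_neg (by omega), if_pos (by omega)]
  have hBg : B g = 2 := by
    simp only [hBdef]; rw [if_neg (by omega), if_neg (by omega), if_pos (by omega)]
  have hBj : B j = 2 := by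
    simp only [hBdef]; rw [if_neg (by omega), if_neg (by omega), if_pos (by omega)]
  have hB1j : B (1 + j) = 3 := by
    simp only [hBdef]; rw [if_neg (by omega), if_neg (by omega), if_neg (by omega)]
  have hBn1 : B (n - 1) = 3 := by
    simp only [hBdef]; rw [if_neg (by omega), if_neg (by omega), if_neg (by omega)]
  have hf0 : f (ℓ m0) = 0 := by
    have := hfl 0 (by omega); rwa [Nat.add_zero, hB0] at this
  have hf1 : f (ℓ (m0 + 1)) = 1 := by rw [hfl 1 (by omega), hB1]
  have hfg1 : f (ℓ (m0 + (g - 1))) = 1 := by rw [hfl (g - 1) (by omega), hBg1]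
  have hfg : f (ℓ (m0 + g)) = 2 := by rw [hfl g (by omega), hBg]
  have hfj : f (ℓ (m0 + j)) = 2 := by rw [hfl j (by omega), hBj]
  have hf1j : f (ℓ (m0 + (1 + j))) = 3 := by rw [hfl (1 + j) (by omega), hB1j]
  have hfn1 : f (ℓ (m0 + (n - 1))) = 3 := by rw [hfl (n - 1) (by omega), hBn1]
  -- the six adjacencies
  have a01 : F.Adj (ℓ m0) (ℓ (m0 + 1)) := hadjmod m0
  have a12 : F.Adj (ℓ (m0 + (g - 1))) (ℓ (m0 + g)) := by
    have := hadjmod (m0 + (g - 1))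
    rwa [show m0 + (g - 1) + 1 = m0 + g by omega] at this
  have a23 : F.Adj (ℓ (m0 + j)) (ℓ (m0 + (1 + j))) := by
    have := hadjmod (m0 + j)
    rwa [show m0 + j + 1 = m0 + (1 + j) by omega] at this
  have a30 : F.Adj (ℓ (m0 + (n - 1))) (ℓ m0) := by
    have := hadjmod (m0 + (n - 1))
    rwa [show m0 + (n - 1) + 1 = m0 + n by omega, hper] at this
  refine ⟨f, m0 % n, ?_, ?_, ?_⟩
  · -- surjectivity
    intro c
    fin_cases c
    · exact ⟨ℓ m0, hf0⟩
    · exact ⟨ℓ (m0 + 1), hf1⟩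
    · exact ⟨ℓ (m0 + g), hfg⟩
    · exact ⟨ℓ (m0 + (1 + j)), hf1j⟩
  · -- the chain condition
    show List.IsChain _ _
    rw [List.isChain_iff_getElem]
    intro i hi
    simp only [List.length_map, List.length_rotate] at hi
    rw [List.getElem_map, List.getElem_map,
      List.getElem_rotate, List.getElem_rotate]
    have key : ∀ s : ℕ, s < n → (hs : (s + m0 % n) % L.length < L.length) →
        L[(s + m0 % n) % L.length]'hs = ℓ (m0 + s) := by
      intro s hs hsl
      rw [← List.getD_eq_getElem _ v hsl, hgetD]
      congr 1
      rw [← hndef, Nat.add_comm s (m0 % n), Nat.mod_add_mod, Nat.add_comm m0 s,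
        ← Nat.mod_add_mod, Nat.mod_add_mod]
    rw [key i (by omega) _, key (i + 1) (by omega) _,
      hfl i (by omega), hfl (i + 1) (by omega)]
    exact hBmono i (i + 1) (by omega)
  · -- the edges
    intro c d hcd
    fin_cases c <;> fin_cases d
    · exact absurd rfl hcd
    · exact ⟨_, _, hf0, hf1, a01⟩
    · exact ⟨_, _, hf0, hfg, hm0adj⟩
    · exact ⟨_, _, hf0, hfn1, a30.symm⟩
    · exact ⟨_, _, hf1, hf0, a01.symm⟩
    · exact absurd rfl hcd
    · exact ⟨_, _, hfg1, hfg, a12⟩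
    · exact ⟨_, _, hf1, hf1j, hjadj'⟩
    · exact ⟨_, _, hfg, hf0, hm0adj.symm⟩
    · exact ⟨_, _, hfg, hfg1, a12.symm⟩
    · exact absurd rfl hcd
    · exact ⟨_, _, hfj, hf1j, a23⟩
    · exact ⟨_, _, hfn1, hf0, a30⟩
    · exact ⟨_, _, hf1j, hf1, hjadj'.symm⟩
    · exact ⟨_, _, hf1j, hfj, a23.symm⟩
    · exact absurd rfl hcd
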